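/- Let g ∈ C^L be a window, b a divisor of L, M=L/b, and suppose K_g := min_{t=0..L-1} Σ_{k=0}^{b-1} |g[t+kM]|² > 0. Let C_N[m,m'] = σ₀² Σ_{k=0}^{L-1} conj(ĝ)[k] ĝ[k-(m'-m)b] be the noise Gabor covariance. Then for every x ∈ C^M, x* C_N x ≥ σ₀² K_g L ‖x‖² (up to normalization convention); in particular C_N, and hence any covariance of the form C_Z-part + C_N with C_Z-part positive semidefinite, is invertible. -/

import Mathlib

open MeasureTheory ProbabilityTheory Complex Finset
noncomputable section

/-- The character `e^{2πin/L}`. -/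
def fchar (L : ℕ) (n : ℤ) : ℂ := Complex.exp (2 * Real.pi * Complex.I * n / L)

/-- Unnormalized discrete Fourier transform of a signal of length `L`. -/
def dft {L : ℕ} [NeZero L] (x : ZMod L → ℂ) (k : ZMod L) : ℂ :=
  ∑ t : ZMod L, x t * fchar L (-((k.val : ℤ) * t.val))

/-- The set of positive frequencies `I_L^+ \ {0}`, i.e. `[1, L/2]` for even `L`
and `[1, (L-1)/2]` for odd `L`. -/
def posFreq (L : ℕ) [NeZero L] : Finset (ZMod L) :=
  Finset.univ.filter fun k => 1 ≤ k.val ∧ 2 * k.val ≤ L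

/-- A real random vector is (jointly) Gaussian if every linear combination of its
coordinates has a Gaussian law. -/
def IsRealGaussian {Ω : Type*} [MeasurableSpace Ω] (μ : Measure Ω) {ι : Type*} [Fintype ι]
    (X : Ω → ι → ℝ) : Prop :=
  ∀ c : ι → ℝ, ∃ m v, Measure.map (fun ω => ∑ i, c i * X ω i) μ = gaussianReal m v

/-- A complex random vector is (jointly) Gaussian if every real-linear functional of its
coordinates has a Gaussian law. -/
def IsComplexGaussian {Ω : Type*} [MeasurableSpace Ω] (μ : Measure Ω) {ι : Type*} [Fintype ι]
    (X : Ω → ι → ℂ) : Prop :=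
  ∀ c : ι → ℂ, ∃ m v, Measure.map (fun ω => (∑ i, c i * X ω i).re) μ = gaussianReal m v

/-- The discrete analytic signal of a real signal: zero the negative-frequency Fourier
coefficients and double the positive ones. -/
def analyticSignal {L : ℕ} [NeZero L] (x : ZMod L → ℝ) (t : ZMod L) : ℂ :=
  (L : ℂ)⁻¹ * ∑ k ∈ posFreq L, 2 * dft (fun s => (x s : ℂ)) k * fchar L ((k.val : ℤ) * t.val)


/-- character on ZMod L -/
def ec (L : ℕ) [NeZero L] (a : ZMod L) : ℂ := fchar L (a.val : ℤ)

lemma fchar_add (L : ℕ) (m n : ℤ) : fchar L (m + n) = fchar L m * fchar L n := by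
  unfold fchar
  rw [← Complex.exp_add]
  congr 1
  push_cast
  ring

lemma fchar_int (L : ℕ) [NeZero L] (n : ℤ) : fchar L n = ec L ((n : ZMod L)) := by
  obtain ⟨q, hq⟩ : (L : ℤ) ∣ n - (((n : ZMod L).val : ℤ)) := by
    rw [← ZMod.intCast_zmod_eq_zero_iff_dvd]
    push_cast
    simp [ZMod.natCast_val, ZMod.cast_id]
  have hn : n = (((n : ZMod L).val : ℤ)) + L * q := by linarith
  have h2 : fchar L ((L : ℤ) * q) = 1 := by
    unfold fchar
    have hL : (L : ℂ) ≠ 0 := Nat.cast_ne_zero.mpr (NeZero.ne L)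
    rw [show (2 * (Real.pi:ℂ) * Complex.I * (((L:ℤ) * q : ℤ) : ℂ) / L) = q * (2 * Real.pi * Complex.I) by push_cast; field_simp]
    exact Complex.exp_int_mul_two_pi_mul_I q
  have h3 : fchar L n = fchar L (((n : ZMod L).val : ℤ)) * fchar L ((L:ℤ) * q) := by
    rw [← fchar_add]
    exact congrArg (fchar L) (by linarith)
  rw [h3, h2, mul_one]
  rfl

lemma ec_add (L : ℕ) [NeZero L] (a b : ZMod L) : ec L (a + b) = ec L a * ec L b := by
  have h := (fchar_int L ((a.val : ℤ) + (b.val : ℤ))).symm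
  have h2 : ((((a.val : ℤ) + (b.val : ℤ)) : ℤ) : ZMod L) = a + b := by
    push_cast
    simp [ZMod.natCast_val, ZMod.cast_id]
  rw [h2] at h
  rw [h, fchar_add]
  rfl

lemma ec_zero (L : ℕ) [NeZero L] : ec L 0 = 1 := by
  unfold ec fchar
  simp

lemma ec_conj (L : ℕ) [NeZero L] (a : ZMod L) :
    (starRingEnd ℂ) (ec L a) = ec L (-a) := by
  have h1 : (starRingEnd ℂ) (fchar L (a.val : ℤ)) = fchar L (-(a.val : ℤ)) := by
    unfold fchar
    rw [← Complex.exp_conj]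
    congr 1
    rw [map_div₀]
    simp only [map_mul, map_neg, map_intCast, map_natCast, map_ofNat, Complex.conj_I,
      Complex.conj_ofReal]
    push_cast
    ring
  have h2 : fchar L (-(a.val : ℤ)) = ec L ((-(a.val : ℤ) : ℤ) : ZMod L) := fchar_int L _
  have h3 : ((-(a.val : ℤ) : ℤ) : ZMod L) = -a := by
    push_cast
    simp [ZMod.natCast_val, ZMod.cast_id]
  rw [show (starRingEnd ℂ) (ec L a) = (starRingEnd ℂ) (fchar L (a.val : ℤ)) from rfl, h1, h2, h3]

lemma ec_nat_mul (L : ℕ) [NeZero L] (j : ℕ) (a : ZMod L) :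
    ec L ((j : ZMod L) * a) = ec L a ^ j := by
  induction j with
  | zero => simp [ec_zero]
  | succ n ih =>
      have : ((n + 1 : ℕ) : ZMod L) * a = (n : ZMod L) * a + a := by push_cast; ring
      rw [this, ec_add, ih, pow_succ]

lemma ec_ne_one (L : ℕ) [NeZero L] {a : ZMod L} (ha : a ≠ 0) : ec L a ≠ 1 := by
  intro h
  unfold ec fchar at h
  rw [Complex.exp_eq_one_iff] at h
  obtain ⟨n, hn⟩ := h
  have hL : (L : ℂ) ≠ 0 := Nat.cast_ne_zero.mpr (NeZero.ne L)
  have hpi : (2 * (Real.pi : ℂ) * Complex.I) ≠ 0 := by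
    simp [Real.pi_ne_zero, Complex.I_ne_zero]
  have hval : (((a.val : ℤ) : ℂ)) = (n : ℂ) * L := by
    rw [div_eq_iff hL] at hn
    have h2 : (2 * (Real.pi:ℂ) * Complex.I) * (((a.val:ℤ)) : ℂ) = (2 * (Real.pi:ℂ) * Complex.I) * ((n:ℂ) * L) := by
      linear_combination hn
    exact mul_left_cancel₀ hpi h2
  have hint : (a.val : ℤ) = n * L := by
    exact_mod_cast hval
  have h1 : 0 < a.val := ZMod.val_pos.mpr ha
  have h2 : a.val < L := ZMod.val_lt a
  rcases le_or_gt n 0 with h | h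
  · nlinarith [h1, h2, (show (0:ℤ) < L by exact_mod_cast Nat.pos_of_ne_zero (NeZero.ne L))]
  · have : (1 : ℤ) ≤ n := h
    nlinarith [(show (a.val : ℤ) < L by exact_mod_cast h2), (show (0:ℤ) < L by exact_mod_cast Nat.pos_of_ne_zero (NeZero.ne L))]

lemma zmod_sum {L : ℕ} [NeZero L] {β : Type*} [AddCommMonoid β] (f : ZMod L → β) :
    ∑ t : ZMod L, f t = ∑ j ∈ Finset.range L, f (j : ZMod L) := by
  refine Finset.sum_nbij' (fun t => t.val) (fun j => ((j : ℕ) : ZMod L)) ?_ ?_ ?_ ?_ ?_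
  · intro a _; exact Finset.mem_range.mpr (ZMod.val_lt a)
  · intro a _; exact Finset.mem_univ _
  · intro a _; simp [ZMod.natCast_val, ZMod.cast_id]
  · intro a ha; exact ZMod.val_natCast_of_lt (Finset.mem_range.mp ha)
  · intro a _; simp [ZMod.natCast_val, ZMod.cast_id]

lemma sum_ec (L : ℕ) [NeZero L] {a : ZMod L} (ha : a ≠ 0) :
    ∑ t : ZMod L, ec L (a * t) = 0 := by
  have h1 : ∑ t : ZMod L, ec L (a * t) = ∑ j ∈ Finset.range L, (ec L a) ^ j := by
    rw [zmod_sum (fun t => ec L (a * t))]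
    refine Finset.sum_congr rfl fun j _ => ?_
    rw [mul_comm, ec_nat_mul]
  rw [h1, geom_sum_eq (ec_ne_one L ha)]
  have : ec L a ^ L = 1 := by
    rw [← ec_nat_mul]
    simp [ZMod.natCast_self, ec_zero]
  rw [this, sub_self, zero_div]

lemma dft_eq {L : ℕ} [NeZero L] (x : ZMod L → ℂ) (k : ZMod L) :
    dft x k = ∑ t : ZMod L, x t * ec L (-(k * t)) := by
  unfold dft
  refine Finset.sum_congr rfl fun t _ => ?_
  congr 1
  rw [fchar_int]
  congr 1
  push_cast
  simp [ZMod.natCast_val, ZMod.cast_id]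

lemma sum_ec_ite (L : ℕ) [NeZero L] (a : ZMod L) :
    ∑ k : ZMod L, ec L (k * a) = if a = 0 then (L : ℂ) else 0 := by
  split
  · next h =>
      subst h
      simp [ec_zero, ZMod.card]
  · next h =>
      simp_rw [mul_comm]
      exact sum_ec L h

lemma parseval (L : ℕ) [NeZero L] (x : ZMod L → ℂ) :
    ∑ k : ZMod L, dft x k * (starRingEnd ℂ) (dft x k)
      = (L : ℂ) * ∑ t : ZMod L, x t * (starRingEnd ℂ) (x t) := by
  have hconj : ∀ k : ZMod L, (starRingEnd ℂ) (dft x k)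
      = ∑ s : ZMod L, (starRingEnd ℂ) (x s) * ec L (k * s) := by
    intro k
    rw [dft_eq, map_sum]
    refine Finset.sum_congr rfl fun s _ => ?_
    rw [map_mul, ec_conj, neg_neg]
  calc ∑ k : ZMod L, dft x k * (starRingEnd ℂ) (dft x k)
      = ∑ k : ZMod L, ∑ t : ZMod L, ∑ s : ZMod L,
          (x t * (starRingEnd ℂ) (x s)) * ec L (k * (s - t)) := by
        refine Finset.sum_congr rfl fun k _ => ?_
        rw [hconj, dft_eq, Finset.sum_mul_sum]
        refine Finset.sum_congr rfl fun t _ => Finset.sum_congr rfl fun s _ => ?_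
        have h1 : ec L (-(k * t)) * ec L (k * s) = ec L (k * (s - t)) := by
          rw [← ec_add]
          congr 1
          ring
        calc x t * ec L (-(k * t)) * ((starRingEnd ℂ) (x s) * ec L (k * s))
            = (x t * (starRingEnd ℂ) (x s)) * (ec L (-(k * t)) * ec L (k * s)) := by ring
          _ = (x t * (starRingEnd ℂ) (x s)) * ec L (k * (s - t)) := by rw [h1]
    _ = ∑ t : ZMod L, ∑ s : ZMod L,
          (x t * (starRingEnd ℂ) (x s)) * ∑ k : ZMod L, ec L (k * (s - t)) := by
        rw [Finset.sum_comm]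
        refine Finset.sum_congr rfl fun t _ => ?_
        rw [Finset.sum_comm]
        refine Finset.sum_congr rfl fun s _ => ?_
        rw [Finset.mul_sum]
    _ = ∑ t : ZMod L, (x t * (starRingEnd ℂ) (x t)) * (L : ℂ) := by
        refine Finset.sum_congr rfl fun t _ => ?_
        rw [Finset.sum_eq_single t]
        · rw [sum_ec_ite]
          simp
        · intro s _ hst
          rw [sum_ec_ite, if_neg (by simpa [sub_eq_zero] using hst), mul_zero]
        · intro h
          exact absurd (Finset.mem_univ t) h
    _ = (L : ℂ) * ∑ t : ZMod L, x t * (starRingEnd ℂ) (x t) := by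
        rw [Finset.mul_sum]
        exact Finset.sum_congr rfl fun t _ => by ring

lemma parseval_norm (L : ℕ) [NeZero L] (x : ZMod L → ℂ) :
    ∑ k : ZMod L, ‖dft x k‖ ^ 2 = (L : ℝ) * ∑ t : ZMod L, ‖x t‖ ^ 2 := by
  have h := parseval L x
  simp_rw [Complex.mul_conj'] at h
  exact_mod_cast h

lemma sum_range_decomp {β : Type*} [AddCommMonoid β] (f : ℕ → β) (M b : ℕ) :
    ∑ j ∈ Finset.range (M * b), f j
      = ∑ i ∈ Finset.range M, ∑ j ∈ Finset.range b, f (i + j * M) := by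
  induction b with
  | zero => simp
  | succ n ih =>
      rw [Nat.mul_succ, Finset.sum_range_add, ih, ← Finset.sum_add_distrib]
      exact Finset.sum_congr rfl fun i _ => by
        rw [Finset.sum_range_succ, Nat.mul_comm M n, Nat.add_comm (n * M) i]

lemma fchar_mul_right {L M b : ℕ} [NeZero b] [NeZero M] (hL : L = M * b) (n : ℤ) :
    fchar L (n * b) = fchar M n := by
  unfold fchar
  congr 1
  subst hL
  have hb : (b : ℂ) ≠ 0 := Nat.cast_ne_zero.mpr (NeZero.ne b)
  have hM : (M : ℂ) ≠ 0 := Nat.cast_ne_zero.mpr (NeZero.ne M)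
  push_cast
  field_simp

def finZModEquiv (M : ℕ) [NeZero M] : Fin M ≃ ZMod M where
  toFun m := ((m : ℕ) : ZMod M)
  invFun u := ⟨u.val, ZMod.val_lt u⟩
  left_inv m := Fin.ext (ZMod.val_natCast_of_lt m.isLt)
  right_inv u := ZMod.natCast_rightInverse u

lemma ec_scale {L M b : ℕ} [NeZero L] [NeZero M] [NeZero b] (hL : L = M * b) (n : ℤ) :
    ec L (((n * b : ℤ)) : ZMod L) = ec M ((n : ℤ) : ZMod M) := by
  rw [← fchar_int, ← fchar_int, fchar_mul_right hL]

lemma key_bound {L : ℕ} [NeZero L] (g : ZMod L → ℂ) (b M : ℕ) [NeZero b] [NeZero M]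
    (hL : L = M * b) (Kg : ℝ)
    (hK : ∀ t : ZMod L, Kg ≤ ∑ k ∈ Finset.range b, ‖g (t + ((k * M : ℕ) : ZMod L))‖ ^ 2)
    (x : Fin M → ℂ) :
    ∃ P : ℝ, Kg * M * (∑ m, ‖x m‖ ^ 2) ≤ P ∧
      (∑ m : Fin M, ∑ m' : Fin M, (starRingEnd ℂ) (x m) * x m' *
        ∑ k : ZMod L, (starRingEnd ℂ) (dft g k) *
          dft g (k - ((((m' : ℤ) - (m : ℤ)) * b : ℤ) : ZMod L)))
      = (L : ℂ) * ((P : ℝ) : ℂ) := by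
  classical
  set X : ZMod L → ℂ :=
    fun t => ∑ m : Fin M, (starRingEnd ℂ) (x m) * ec L (-(t * ((m * b : ℕ) : ZMod L))) with hXdef
  set h : ZMod L → ℂ := fun t => g t * X t with hhdef
  have hS : ∀ k : ZMod L,
      (∑ m : Fin M, (starRingEnd ℂ) (x m) * dft g (k + ((m * b : ℕ) : ZMod L))) = dft h k := by
    intro k
    rw [dft_eq]
    calc ∑ m : Fin M, (starRingEnd ℂ) (x m) * dft g (k + ((m * b : ℕ) : ZMod L))
        = ∑ m : Fin M, ∑ t : ZMod L,
            (g t * ((starRingEnd ℂ) (x m) * ec L (-(t * ((m * b : ℕ) : ZMod L)))))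
              * ec L (-(k * t)) := by
          refine Finset.sum_congr rfl fun m _ => ?_
          rw [dft_eq, Finset.mul_sum]
          refine Finset.sum_congr rfl fun t _ => ?_
          have he : ec L (-((k + ((m * b : ℕ) : ZMod L)) * t))
              = ec L (-(t * ((m * b : ℕ) : ZMod L))) * ec L (-(k * t)) := by
            rw [← ec_add]
            congr 1
            ring
          rw [he]
          ring
      _ = ∑ t : ZMod L, h t * ec L (-(k * t)) := by
          rw [Finset.sum_comm]
          refine Finset.sum_congr rfl fun t _ => ?_
          simp only [hhdef, hXdef]
          simp [Finset.mul_sum, Finset.sum_mul, mul_assoc]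
  have hcast : ∀ m m' : Fin M,
      ((m' * b : ℕ) : ZMod L) - ((((m' : ℤ) - (m : ℤ)) * b : ℤ) : ZMod L)
        = ((m * b : ℕ) : ZMod L) := by
    intro m m'
    push_cast
    ring
  have hre : ∀ m m' : Fin M,
      (∑ k : ZMod L, (starRingEnd ℂ) (dft g k) *
          dft g (k - ((((m' : ℤ) - (m : ℤ)) * b : ℤ) : ZMod L)))
      = ∑ k : ZMod L, (starRingEnd ℂ) (dft g (k + ((m' * b : ℕ) : ZMod L)))
          * dft g (k + ((m * b : ℕ) : ZMod L)) := by
    intro m m'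
    refine Fintype.sum_equiv (Equiv.subRight (((m' * b : ℕ) : ZMod L))) _ _ fun k => ?_
    have h1 : k - ((m' * b : ℕ) : ZMod L) + ((m' * b : ℕ) : ZMod L) = k := by ring
    have h2 : k - ((m' * b : ℕ) : ZMod L) + ((m * b : ℕ) : ZMod L)
        = k - ((((m' : ℤ) - (m : ℤ)) * b : ℤ) : ZMod L) := by
      rw [← hcast m m']
      ring
    simp only [Equiv.subRight_apply, h1, h2]
  have hper : ∀ i j : ℕ, X (((i + j * M : ℕ)) : ZMod L) = X ((i : ℕ) : ZMod L) := by
    intro i j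
    simp only [hXdef]
    refine Finset.sum_congr rfl fun m _ => ?_
    have h0 : ((j * M : ℕ) : ZMod L) * ((m * b : ℕ) : ZMod L) = 0 := by
      rw [← Nat.cast_mul, ZMod.natCast_eq_zero_iff]
      exact ⟨j * (m : ℕ), by rw [hL]; ring⟩
    congr 2
    push_cast at h0 ⊢
    linear_combination -h0
  have hsplit : ∀ i j : ℕ, ((i + j * M : ℕ) : ZMod L) = ((i : ℕ) : ZMod L) + ((j * M : ℕ) : ZMod L) := by
    intro i j
    push_cast
    ring
  have hsum8 : ∑ i ∈ Finset.range M, ‖X ((i : ℕ) : ZMod L)‖ ^ 2 = M * ∑ m, ‖x m‖ ^ 2 := by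
    set y : ZMod M → ℂ := fun u => (starRingEnd ℂ) (x ⟨u.val, ZMod.val_lt u⟩) with hy
    have hXdft : ∀ i : ℕ, X ((i : ℕ) : ZMod L) = dft y ((i : ℕ) : ZMod M) := by
      intro i
      rw [dft_eq]
      have hre2 : (∑ u : ZMod M, y u * ec M (-(((i : ℕ) : ZMod M) * u)))
          = ∑ m : Fin M, y (((m : ℕ) : ZMod M)) * ec M (-(((i : ℕ) : ZMod M) * ((m : ℕ) : ZMod M))) :=
        (Fintype.sum_equiv (finZModEquiv M) _ _ fun m => rfl).symm
      rw [hre2]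
      simp only [hXdef]
      refine Finset.sum_congr rfl fun m _ => ?_
      have hy2 : y (((m : ℕ) : ZMod M)) = (starRingEnd ℂ) (x m) := by
        simp only [hy]
        exact congrArg _ (congrArg x (Fin.ext (ZMod.val_natCast_of_lt m.isLt)))
      have hchar : ec L (-(((i : ℕ) : ZMod L) * ((m * b : ℕ) : ZMod L)))
          = ec M (-(((i : ℕ) : ZMod M) * ((m : ℕ) : ZMod M))) := by
        have hsc := ec_scale (M := M) (b := b) hL (-((i : ℤ) * ((m : ℕ) : ℤ)))
        have e1 : (((-((i : ℤ) * ((m : ℕ) : ℤ)) * b : ℤ)) : ZMod L)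
            = -(((i : ℕ) : ZMod L) * ((m * b : ℕ) : ZMod L)) := by push_cast; ring
        have e2 : (((-((i : ℤ) * ((m : ℕ) : ℤ))) : ℤ) : ZMod M)
            = -(((i : ℕ) : ZMod M) * ((m : ℕ) : ZMod M)) := by push_cast; ring
        rw [e1, e2] at hsc
        exact hsc
      rw [hy2, hchar]
    calc ∑ i ∈ Finset.range M, ‖X ((i : ℕ) : ZMod L)‖ ^ 2
        = ∑ i ∈ Finset.range M, ‖dft y ((i : ℕ) : ZMod M)‖ ^ 2 :=
          Finset.sum_congr rfl fun i _ => by rw [hXdft i]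
      _ = ∑ κ : ZMod M, ‖dft y κ‖ ^ 2 := (zmod_sum (fun κ : ZMod M => ‖dft y κ‖ ^ 2)).symm
      _ = (M : ℝ) * ∑ u : ZMod M, ‖y u‖ ^ 2 := parseval_norm M y
      _ = (M : ℝ) * ∑ m : Fin M, ‖x m‖ ^ 2 := by
          congr 1
          refine Fintype.sum_equiv (finZModEquiv M).symm _ _ fun u => ?_
          simp [hy, finZModEquiv]
  refine ⟨∑ t : ZMod L, ‖h t‖ ^ 2, ?_, ?_⟩
  · calc Kg * M * (∑ m, ‖x m‖ ^ 2)
        = Kg * ∑ i ∈ Finset.range M, ‖X ((i : ℕ) : ZMod L)‖ ^ 2 := by rw [hsum8]; ring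
      _ ≤ ∑ i ∈ Finset.range M,
            (∑ j ∈ Finset.range b, ‖g (((i : ℕ) : ZMod L) + ((j * M : ℕ) : ZMod L))‖ ^ 2)
              * ‖X ((i : ℕ) : ZMod L)‖ ^ 2 := by
          rw [Finset.mul_sum]
          exact Finset.sum_le_sum fun i _ =>
            mul_le_mul_of_nonneg_right (hK _) (by positivity)
      _ = ∑ t : ZMod L, ‖h t‖ ^ 2 := by
          rw [zmod_sum (fun t => ‖h t‖ ^ 2), show Finset.range L = Finset.range (M * b) from by rw [← hL], sum_range_decomp]
          refine Finset.sum_congr rfl fun i _ => ?_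
          rw [Finset.sum_mul]
          refine Finset.sum_congr rfl fun j _ => ?_
          simp only [hhdef]
          rw [norm_mul, mul_pow, hper i j, ← hsplit i j]
  · calc (∑ m : Fin M, ∑ m' : Fin M, (starRingEnd ℂ) (x m) * x m' *
        ∑ k : ZMod L, (starRingEnd ℂ) (dft g k) *
          dft g (k - ((((m' : ℤ) - (m : ℤ)) * b : ℤ) : ZMod L)))
        = ∑ m : Fin M, ∑ m' : Fin M, ∑ k : ZMod L,
            ((starRingEnd ℂ) (x m) * dft g (k + ((m * b : ℕ) : ZMod L)))
              * (x m' * (starRingEnd ℂ) (dft g (k + ((m' * b : ℕ) : ZMod L)))) := by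
          refine Finset.sum_congr rfl fun m _ => Finset.sum_congr rfl fun m' _ => ?_
          rw [hre m m', Finset.mul_sum]
          exact Finset.sum_congr rfl fun k _ => by ring
      _ = ∑ m : Fin M, ∑ k : ZMod L, ∑ m' : Fin M,
            ((starRingEnd ℂ) (x m) * dft g (k + ((m * b : ℕ) : ZMod L)))
              * (x m' * (starRingEnd ℂ) (dft g (k + ((m' * b : ℕ) : ZMod L)))) :=
          Finset.sum_congr rfl fun m _ => Finset.sum_comm
      _ = ∑ k : ZMod L, ∑ m : Fin M, ∑ m' : Fin M,
            ((starRingEnd ℂ) (x m) * dft g (k + ((m * b : ℕ) : ZMod L)))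
              * (x m' * (starRingEnd ℂ) (dft g (k + ((m' * b : ℕ) : ZMod L)))) :=
          Finset.sum_comm
      _ = ∑ k : ZMod L, dft h k * (starRingEnd ℂ) (dft h k) := by
          refine Finset.sum_congr rfl fun k _ => ?_
          rw [← Finset.sum_mul_sum, hS k]
          congr 1
          rw [← hS k, map_sum]
          exact Finset.sum_congr rfl fun m _ => by simp
      _ = (L : ℂ) * ∑ t : ZMod L, h t * (starRingEnd ℂ) (h t) := parseval L h
      _ = (L : ℂ) * (((∑ t : ZMod L, ‖h t‖ ^ 2 : ℝ)) : ℂ) := by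
          congr 1
          simp only [Complex.mul_conj']
          push_cast
          ring


open Matrix
open scoped ComplexOrder in
/-- if `K_g := min_t ∑_{k<b} |g[t+kM]|² > 0`, then the noise Gabor covariance
`C_N[m,m'] = (σ₀²/L) ∑_k conj(ĝ)[k] ĝ[k-(m'-m)b]` satisfies
`x* C_N x ≥ σ₀² K_g M ‖x‖²` (normalization matching the unnormalized DFT); in particular
`C_N`, and any matrix of the form `A + C_N` with `A` positive semidefinite, is invertible. -/
theorem noise_gabor_covariance_invertible
    {L : ℕ} [NeZero L] (g : ZMod L → ℂ) (b : ℕ) (hb : b ∣ L) (M : ℕ) (hM : M = L / b)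
    (σ₀ Kg : ℝ) (hσ : σ₀ ≠ 0) (hKpos : 0 < Kg)
    (hK : ∀ t : ZMod L, Kg ≤ ∑ k ∈ Finset.range b, ‖g (t + ((k * M : ℕ) : ZMod L))‖ ^ 2)
    (hKmin : ∃ t : ZMod L, Kg = ∑ k ∈ Finset.range b, ‖g (t + ((k * M : ℕ) : ZMod L))‖ ^ 2)
    (C : Matrix (Fin M) (Fin M) ℂ)
    (hC : ∀ m m' : Fin M, C m m' = (σ₀ ^ 2 / L : ℂ) * ∑ k : ZMod L,
      (starRingEnd ℂ) (dft g k) * dft g (k - ((((m' : ℤ) - (m : ℤ)) * b : ℤ) : ZMod L))) :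
    (∀ x : Fin M → ℂ, σ₀ ^ 2 * Kg * M * (∑ m, ‖x m‖ ^ 2) ≤ Complex.re (star x ⬝ᵥ C.mulVec x)) ∧
    IsUnit C ∧
    ∀ A : Matrix (Fin M) (Fin M) ℂ, A.PosSemidef → IsUnit (A + C) := by
  have hb0 : b ≠ 0 := fun h => NeZero.ne L (zero_dvd_iff.mp (h ▸ hb))
  have hLMb : L = M * b := by rw [hM, Nat.div_mul_cancel hb]
  have hM0 : M ≠ 0 := by
    rintro rfl
    exact NeZero.ne L (by simpa using hLMb)
  haveI : NeZero b := ⟨hb0⟩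
  haveI : NeZero M := ⟨hM0⟩
  have main : ∀ x : Fin M → ℂ,
      σ₀ ^ 2 * Kg * M * (∑ m, ‖x m‖ ^ 2) ≤ Complex.re (star x ⬝ᵥ C.mulVec x) := by
    intro x
    obtain ⟨P, hP1, hP2⟩ := key_bound g b M hLMb Kg hK x
    have hexp : star x ⬝ᵥ C.mulVec x = (σ₀ ^ 2 / L : ℂ) * ((L : ℂ) * ((P : ℝ) : ℂ)) := by
      rw [← hP2]
      calc star x ⬝ᵥ C.mulVec x
          = ∑ m, ∑ m', (starRingEnd ℂ) (x m) * (C m m' * x m') := by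
            simp [dotProduct, Matrix.mulVec, Finset.mul_sum]
        _ = (σ₀ ^ 2 / L : ℂ) * ∑ m : Fin M, ∑ m' : Fin M, (starRingEnd ℂ) (x m) * x m' *
              ∑ k : ZMod L, (starRingEnd ℂ) (dft g k) *
                dft g (k - ((((m' : ℤ) - (m : ℤ)) * b : ℤ) : ZMod L)) := by
            rw [Finset.mul_sum]
            refine Finset.sum_congr rfl fun m _ => ?_
            rw [Finset.mul_sum]
            refine Finset.sum_congr rfl fun m' _ => ?_
            rw [hC m m']
            ring
    have hL0 : (L : ℂ) ≠ 0 := Nat.cast_ne_zero.mpr (NeZero.ne L)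
    have hval : star x ⬝ᵥ C.mulVec x = ((σ₀ ^ 2 * P : ℝ) : ℂ) := by
      rw [hexp]
      push_cast
      field_simp
    rw [hval, Complex.ofReal_re]
    nlinarith [sq_nonneg σ₀, hP1]
  have hpos : ∀ x : Fin M → ℂ, x ≠ 0 → 0 < Complex.re (star x ⬝ᵥ C.mulVec x) := by
    intro x hx
    refine lt_of_lt_of_le ?_ (main x)
    have hxs : 0 < ∑ m, ‖x m‖ ^ 2 := by
      obtain ⟨m, hm⟩ := Function.ne_iff.mp hx
      refine Finset.sum_pos' (fun i _ => by positivity) ⟨m, Finset.mem_univ m, pow_pos (norm_pos_iff.mpr hm) 2⟩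
    have hs2 : (0:ℝ) < σ₀ ^ 2 := by positivity
    have hM1 : (0:ℝ) < M := by exact_mod_cast Nat.pos_of_ne_zero hM0
    exact mul_pos (mul_pos (mul_pos hs2 hKpos) hM1) hxs
  refine ⟨main, ?_, ?_⟩
  · apply Matrix.mulVec_injective_iff_isUnit.mp
    intro u v huv
    by_contra hne
    have hx : u - v ≠ 0 := sub_ne_zero.mpr hne
    have h0 : C.mulVec (u - v) = 0 := by rw [Matrix.mulVec_sub, huv, sub_self]
    have hlt := hpos (u - v) hx
    rw [h0] at hlt
    simp at hlt
  · intro A hA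
    apply Matrix.mulVec_injective_iff_isUnit.mp
    intro u v huv
    by_contra hne
    have hx : u - v ≠ 0 := sub_ne_zero.mpr hne
    have h0 : (A + C).mulVec (u - v) = 0 := by rw [Matrix.mulVec_sub, huv, sub_self]
    have hA0 : 0 ≤ Complex.re (star (u - v) ⬝ᵥ A.mulVec (u - v)) := by
      have h := hA.dotProduct_mulVec_nonneg (u - v)
      simpa using (Complex.le_def.mp h).1
    have hC0 := hpos (u - v) hx
    have hzero : (0:ℝ) = Complex.re (star (u - v) ⬝ᵥ A.mulVec (u - v))
        + Complex.re (star (u - v) ⬝ᵥ C.mulVec (u - v)) := by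
      rw [← Complex.add_re, ← dotProduct_add, ← Matrix.add_mulVec, h0]
      simp
    linarith
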